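/- Row spans of the environment matrices (Lemma E.1 / span-Mk-rows). Let G be a DAG on [d], let H ∈ ℝ^{d×n} (n ≥ d) have full row rank with rows h_1,…,h_d, and let {B_k}_{k∈[K]} be a family of d×d real matrices with (B_k)_{ij} ≠ 0 ⟺ j ∈ \bar{pa}_G(i) that is node-level non-degenerate with respect to G. Set M_k = B_k H. Then for every node i ∈ [d], span{(M_k)_i : k ∈ [K]} = span{h_j : j ∈ \bar{pa}_G(i)}, where (M_k)_i denotes the i-th row of M_k. -/

import Mathlib

open Matrix MeasureTheory

/-- `E i j` means there is a directed edge `i → j`. A DAG has no directed cycles. -/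
def IsDAG {d : ℕ} (E : Fin d → Fin d → Prop) : Prop :=
  ∀ i, ¬ Relation.TransGen E i i

/-- The set of parents of `i`. -/
def pa {d : ℕ} (E : Fin d → Fin d → Prop) (i : Fin d) : Set (Fin d) := {j | E j i}

/-- The set of children of `i`. -/
def ch {d : ℕ} (E : Fin d → Fin d → Prop) (i : Fin d) : Set (Fin d) := {j | E i j}

/-- `pa_G(i) ∪ {i}`. -/
def barPa {d : ℕ} (E : Fin d → Fin d → Prop) (i : Fin d) : Set (Fin d) := insert i (pa E i)

/-- `ch_G(i) ∪ {i}`. -/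
def barCh {d : ℕ} (E : Fin d → Fin d → Prop) (i : Fin d) : Set (Fin d) := insert i (ch E i)

/-- The effect-domination set `dom_G(i) = {j ∈ pa_G(i) : ch_G(i) ⊆ ch_G(j)}`. -/
def domSet {d : ℕ} (E : Fin d → Fin d → Prop) (i : Fin d) : Set (Fin d) :=
  {j | j ∈ pa E i ∧ ch E i ⊆ ch E j}

/-- `dom_G(i) ∪ {i}`. -/
def barDom {d : ℕ} (E : Fin d → Fin d → Prop) (i : Fin d) : Set (Fin d) :=
  insert i (domSet E i)

/-- Ancestors of `i`: nodes with a directed path to `i`. -/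
def ans {d : ℕ} (E : Fin d → Fin d → Prop) (i : Fin d) : Set (Fin d) :=
  {j | Relation.TransGen E j i}

/-- A set is ancestral if it is closed under taking ancestors. -/
def Ancestral {d : ℕ} (E : Fin d → Fin d → Prop) (S : Set (Fin d)) : Prop :=
  ∀ j ∈ S, ans E j ⊆ S

/-- The support of `B` matches the graph: `B i j ≠ 0 ↔ j ∈ \bar{pa}_G(i)`. -/
def SupportMatches {d : ℕ} (E : Fin d → Fin d → Prop) (B : Matrix (Fin d) (Fin d) ℝ) : Prop :=
  ∀ i j, B i j ≠ 0 ↔ j ∈ barPa E i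

/-- Node-level non-degeneracy: for every node `i`, the span of the `i`-th rows
`(B_k)_i` has dimension `|pa_G(i)| + 1`. -/
def NodeNonDegenerate {d K : ℕ} (E : Fin d → Fin d → Prop)
    (B : Fin K → Matrix (Fin d) (Fin d) ℝ) : Prop :=
  ∀ i, Module.finrank ℝ (Submodule.span ℝ (Set.range fun k => B k i)) = (pa E i).ncard + 1

/-- Row spans of the environment matrices (Lemma E.1): for every node `i`,
`span{(M_k)_i : k ∈ [K]} = span{h_j : j ∈ \bar{pa}_G(i)}` where `M_k = B_k H`. -/
theorem span_Mk_rows {d n K : ℕ} (hn : d ≤ n)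
    (E : Fin d → Fin d → Prop) (hG : IsDAG E)
    (H : Matrix (Fin d) (Fin n) ℝ) (hH : H.rank = d)
    (B : Fin K → Matrix (Fin d) (Fin d) ℝ)
    (hsupp : ∀ k, SupportMatches E (B k))
    (hnd : NodeNonDegenerate E B) :
    ∀ i : Fin d,
      Submodule.span ℝ (Set.range fun k => (B k * H) i)
        = Submodule.span ℝ ((fun j => H j) '' barPa E i) := by

  classical
  intro i
  have hii : i ∉ pa E i := fun h => hG i (Relation.TransGen.single h)
  set S : Set (Fin d) := barPa E i with hSdef
  have hSfin : S.Finite := Set.toFinite S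
  set e : Fin d → (Fin d → ℝ) := fun j => Pi.single j 1 with he
  -- the standard basis vectors are linearly independent
  have hli : LinearIndependent ℝ e := by
    have h := (Pi.basisFun ℝ (Fin d)).linearIndependent
    have hcoe : ⇑(Pi.basisFun ℝ (Fin d)) = e := by
      funext j
      simp [he]
    rwa [hcoe] at h
  have hinj : Function.Injective e := hli.injective
  -- rows of B k lie in the span of the basis vectors indexed by S
  have hUle : Submodule.span ℝ (Set.range fun k => B k i)
      ≤ Submodule.span ℝ (e '' S) := by
    rw [Submodule.span_le]
    rintro _ ⟨k, rfl⟩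
    show B k i ∈ (Submodule.span ℝ (e '' S) : Set (Fin d → ℝ))
    have h0 : B k i = ∑ j : Fin d, B k i j • e j := by
      ext l
      simp [he, Pi.single_apply, Finset.sum_apply]
    have hsum : ∑ j ∈ hSfin.toFinset, B k i j • e j = ∑ j : Fin d, B k i j • e j := by
      apply Finset.sum_subset (Finset.subset_univ _)
      intro j _ hj
      have hb0 : B k i j = 0 := by
        by_contra hbj
        exact hj (hSfin.mem_toFinset.2 ((hsupp k i j).1 hbj))
      simp [hb0]
    rw [h0.trans hsum.symm]
    exact Submodule.sum_mem _ fun j hj => Submodule.smul_mem _ _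
      (Submodule.subset_span ⟨j, hSfin.mem_toFinset.1 hj, rfl⟩)
  -- the span of the basis vectors indexed by S has dimension |S| = |pa i| + 1
  haveI : Fintype (e '' S) := (hSfin.image e).fintype
  have hVfinrank : Module.finrank ℝ (Submodule.span ℝ (e '' S)) = (pa E i).ncard + 1 := by
    have hliS : LinearIndependent ℝ ((↑) : (e '' S) → (Fin d → ℝ)) :=
      ((linearIndepOn_id_range_iff hinj).mpr hli).mono (Set.image_subset_range e S)
    rw [finrank_span_set_eq_card hliS, ← Set.ncard_eq_toFinset_card',
      Set.ncard_image_of_injective _ hinj, hSdef, barPa,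
      Set.ncard_insert_of_notMem hii (Set.toFinite _)]
  -- equality of the two spans in ℝ^d
  have hUV : Submodule.span ℝ (Set.range fun k => B k i) = Submodule.span ℝ (e '' S) :=
    Submodule.eq_of_le_of_finrank_le hUle (le_of_eq (by rw [hVfinrank, hnd i]))
  -- push forward through v ↦ v ᵥ* H
  have hrow : (fun k => (B k * H) i) = fun k => H.vecMulLinear (B k i) := by
    funext k
    ext j
    simp [Matrix.vecMulLinear, Matrix.mul_apply, Matrix.vecMul, dotProduct]
  have himg : H.vecMulLinear '' (e '' S) = (fun j => H j) '' S := by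
    rw [Set.image_image]
    refine Set.image_congr fun j _ => ?_
    ext l
    simp [he, Matrix.vecMulLinear, Matrix.single_vecMul]
  calc
    Submodule.span ℝ (Set.range fun k => (B k * H) i)
        = Submodule.map H.vecMulLinear (Submodule.span ℝ (Set.range fun k => B k i)) := by
          rw [Submodule.map_span, ← Set.range_comp, hrow]
          rfl
    _ = Submodule.map H.vecMulLinear (Submodule.span ℝ (e '' S)) := by rw [hUV]
    _ = Submodule.span ℝ ((fun j => H j) '' S) := by rw [Submodule.map_span, himg]
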